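/- In the same inapproximability-reduction instance I', if there is a weakly popular matching of size at least (5/2)n − k (with k ≥ n/2), then G has a maximal matching of size at most k. -/

import Mathlib

open Finset
open scoped Classical
noncomputable section

/-- A bipartite preference instance: bipartite (multi)graph `G=(U,W;E)` where each
edge `e` has endpoints `src e ∈ U`, `dst e ∈ W`, and every vertex has a preference
valuation over edges (only values on incident edges are relevant); the valuation of
being unmatched (`∅`) is `0`. -/
structure PrefInst (U W E : Type) where
  src : E → U
  dst : E → W
  pU : U → E → ℝ
  pW : W → E → ℝ

namespace PrefInst

variable {U W E : Type} [DecidableEq U] [DecidableEq W] [DecidableEq E]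

/-- `M` is a matching: no two distinct edges of `M` share an endpoint. -/
def IsMatching (I : PrefInst U W E) (M : Finset E) : Prop :=
  ∀ e ∈ M, ∀ f ∈ M, e ≠ f → I.src e ≠ I.src f ∧ I.dst e ≠ I.dst f

/-- The edge of `M` incident to `u ∈ U` (if any): `M(u)`. -/
def mU (I : PrefInst U W E) (M : Finset E) (u : U) : Option E :=
  (M.filter fun e => I.src e = u).toList.head?

/-- The edge of `M` incident to `w ∈ W` (if any): `M(w)`. -/
def mW (I : PrefInst U W E) (M : Finset E) (w : W) : Option E :=
  (M.filter fun e => I.dst e = w).toList.head?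

/-- Valuation by `u` of a possible partner edge, with `p_u(∅) = 0`. -/
def valU (I : PrefInst U W E) (u : U) : Option E → ℝ
  | none => 0
  | some e => I.pU u e

def valW (I : PrefInst U W E) (w : W) : Option E → ℝ
  | none => 0
  | some e => I.pW w e

/-- `M` is maximal: no edge can be added keeping it a matching. -/
def Maximal (I : PrefInst U W E) (M : Finset E) : Prop :=
  ∀ e ∉ M, ¬ I.IsMatching (insert e M)

/-- Edge `e ∉ M` blocks `M` in the weak-stability sense: both endpoints strictly improve. -/
def Blocks (I : PrefInst U W E) (M : Finset E) (e : E) : Prop :=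
  e ∉ M ∧ I.valU (I.src e) (I.mU M (I.src e)) < I.pU (I.src e) e ∧
    I.valW (I.dst e) (I.mW M (I.dst e)) < I.pW (I.dst e) e

/-- Weak stability: no blocking edge. -/
def WeaklyStable (I : PrefInst U W E) (M : Finset E) : Prop :=
  ∀ e, ¬ I.Blocks M e

/-- Edge `e ∉ M` γ-min blocks `M`: both endpoints improve by at least their γ-threshold. -/
def GBlocks (I : PrefInst U W E) (γU γW : E → ℝ) (M : Finset E) (e : E) : Prop :=
  e ∉ M ∧ I.valU (I.src e) (I.mU M (I.src e)) + γU e ≤ I.pU (I.src e) e ∧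
    I.valW (I.dst e) (I.mW M (I.dst e)) + γW e ≤ I.pW (I.dst e) e

/-- γ-min stability: no γ-min blocking edge. -/
def GMinStable (I : PrefInst U W E) (γU γW : E → ℝ) (M : Finset E) : Prop :=
  ∀ e, ¬ I.GBlocks γU γW M e

/-- Standard vote of `u` comparing `M` to `N`: `+1` if strictly better in `M`,
`-1` if strictly better in `N`, `0` on equal value. -/
def sVoteU (I : PrefInst U W E) (M N : Finset E) (u : U) : ℤ :=
  if I.valU u (I.mU M u) = I.valU u (I.mU N u) then 0
  else if I.valU u (I.mU M u) < I.valU u (I.mU N u) then -1 else 1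

def sVoteW (I : PrefInst U W E) (M N : Finset E) (w : W) : ℤ :=
  if I.valW w (I.mW M w) = I.valW w (I.mW N w) then 0
  else if I.valW w (I.mW M w) < I.valW w (I.mW N w) then -1 else 1

/-- Weak vote of `u`: `0` if same partner, `-1` on strict improvement in `N`,
`+1` otherwise (partner changed without strict improvement). -/
def wVoteU (I : PrefInst U W E) (M N : Finset E) (u : U) : ℤ :=
  if I.mU M u = I.mU N u then 0
  else if I.valU u (I.mU M u) < I.valU u (I.mU N u) then -1 else 1

def wVoteW (I : PrefInst U W E) (M N : Finset E) (w : W) : ℤ :=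
  if I.mW M w = I.mW N w then 0
  else if I.valW w (I.mW M w) < I.valW w (I.mW N w) then -1 else 1

/-- Super vote of `u`: `0` if same partner, `-1` if the new partner is weakly
preferred (and different), `+1` only on strict worsening. -/
def supVoteU (I : PrefInst U W E) (M N : Finset E) (u : U) : ℤ :=
  if I.mU M u = I.mU N u then 0
  else if I.valU u (I.mU M u) ≤ I.valU u (I.mU N u) then -1 else 1

def supVoteW (I : PrefInst U W E) (M N : Finset E) (w : W) : ℤ :=
  if I.mW M w = I.mW N w then 0
  else if I.valW w (I.mW M w) ≤ I.valW w (I.mW N w) then -1 else 1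

/-- γ-vote of `u`: `0` if same partner; `-1` if `p_u(N(u)) ≥ p_u(M(u)) + γ_{N(u)}^u`;
`+1` otherwise (partner changed without a γ-sized improvement). -/
def gVoteU (I : PrefInst U W E) (γU : E → ℝ) (M N : Finset E) (u : U) : ℤ :=
  if I.mU M u = I.mU N u then 0
  else match I.mU N u with
    | none => 1
    | some e => if I.valU u (I.mU M u) + γU e ≤ I.pU u e then -1 else 1

def gVoteW (I : PrefInst U W E) (γW : E → ℝ) (M N : Finset E) (w : W) : ℤ :=
  if I.mW M w = I.mW N w then 0
  else match I.mW N w with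
    | none => 1
    | some e => if I.valW w (I.mW M w) + γW e ≤ I.pW w e then -1 else 1

variable [Fintype U] [Fintype W]

/-- Popularity (standard votes): `M` never loses a head-to-head comparison. -/
def Popular (I : PrefInst U W E) (M : Finset E) : Prop :=
  ∀ N, I.IsMatching N → 0 ≤ (∑ u, I.sVoteU M N u) + ∑ w, I.sVoteW M N w

/-- Weak popularity. -/
def WeaklyPopular (I : PrefInst U W E) (M : Finset E) : Prop :=
  ∀ N, I.IsMatching N → 0 ≤ (∑ u, I.wVoteU M N u) + ∑ w, I.wVoteW M N w

/-- Super popularity. -/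
def SuperPopular (I : PrefInst U W E) (M : Finset E) : Prop :=
  ∀ N, I.IsMatching N → 0 ≤ (∑ u, I.supVoteU M N u) + ∑ w, I.supVoteW M N w

/-- γ-popularity. -/
def GammaPopular (I : PrefInst U W E) (γU γW : E → ℝ) (M : Finset E) : Prop :=
  ∀ N, I.IsMatching N → 0 ≤ (∑ u, I.gVoteU γU M N u) + ∑ w, I.gVoteW γW M N w

end PrefInst
end

namespace PrefInst

/-- `K` is a maximal matching of the bipartite graph `G ⊆ U × W` (given as a
finite set of pairs): it is a matching contained in `G` to which no pair of `G`
can be added. -/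
def IsMaximalMatchingOf {α β : Type} [DecidableEq α] [DecidableEq β]
    (G K : Finset (α × β)) : Prop :=
  K ⊆ G ∧ (∀ p ∈ K, ∀ q ∈ K, p ≠ q → p.1 ≠ q.1 ∧ p.2 ≠ q.2) ∧
    ∀ p ∈ G, ∃ q ∈ K, q.1 = p.1 ∨ q.2 = p.2

/-- The inapproximability-reduction instance `I'` built from a bipartite graph
`G` on `U = W = Fin n`, `n = 2m` even.  U-side agents: `u_i` (`inl i`), `w_i'`
(`inr (inl i)`), `z_j` (`inr (inr j)`); W-side agents: `w_i` (`inl i`), `u_j'`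
(`inr (inl j)`), `z_j'` (`inr (inr j)`).  Edges: `inl ⟨(i,j),_⟩` the edges of
`G`; `inr (inl i) = (w_i,w_i')`; `inr (inr (inl (i,j))) = (u_i,u_j')`;
`inr (inr (inr (inl j))) = (u_j',z_j)`; `inr (inr (inr (inr j))) = (z_j,z_j')`.
Preferences: `u_i: [V_G(u_i)] ≻ [U']`; `w_i: [V_G(w_i)] ≻ w_i'`; `w_i': w_i`;
`u_j': z_j ≻ [U]`; `z_j: u_j' ≻ z_j'`; `z_j': z_j` (brackets are ties). -/
noncomputable def inapx (m : ℕ) (G : Finset (Fin (2 * m) × Fin (2 * m))) :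
    PrefInst (Fin (2 * m) ⊕ Fin (2 * m) ⊕ Fin m) (Fin (2 * m) ⊕ Fin m ⊕ Fin m)
      ({p : Fin (2 * m) × Fin (2 * m) // p ∈ G} ⊕ Fin (2 * m) ⊕
        (Fin (2 * m) × Fin m) ⊕ Fin m ⊕ Fin m) where
  src := fun d =>
    match d with
    | Sum.inl p => Sum.inl p.1.1
    | Sum.inr (Sum.inl i) => Sum.inr (Sum.inl i)
    | Sum.inr (Sum.inr (Sum.inl (i, _))) => Sum.inl i
    | Sum.inr (Sum.inr (Sum.inr (Sum.inl j))) => Sum.inr (Sum.inr j)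
    | Sum.inr (Sum.inr (Sum.inr (Sum.inr j))) => Sum.inr (Sum.inr j)
  dst := fun d =>
    match d with
    | Sum.inl p => Sum.inl p.1.2
    | Sum.inr (Sum.inl i) => Sum.inl i
    | Sum.inr (Sum.inr (Sum.inl (_, j))) => Sum.inr (Sum.inl j)
    | Sum.inr (Sum.inr (Sum.inr (Sum.inl j))) => Sum.inr (Sum.inl j)
    | Sum.inr (Sum.inr (Sum.inr (Sum.inr j))) => Sum.inr (Sum.inr j)
  pU := fun v d =>
    match v, d with
    | Sum.inl i, Sum.inl p => if p.1.1 = i then 2 else 0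
    | Sum.inl i, Sum.inr (Sum.inr (Sum.inl (a, _))) => if a = i then 1 else 0
    | Sum.inl _, _ => 0
    | Sum.inr (Sum.inl i), Sum.inr (Sum.inl a) => if a = i then 1 else 0
    | Sum.inr (Sum.inl _), _ => 0
    | Sum.inr (Sum.inr j), Sum.inr (Sum.inr (Sum.inr (Sum.inl a))) =>
        if a = j then 2 else 0
    | Sum.inr (Sum.inr j), Sum.inr (Sum.inr (Sum.inr (Sum.inr a))) =>
        if a = j then 1 else 0
    | Sum.inr (Sum.inr _), _ => 0
  pW := fun v d =>
    match v, d with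
    | Sum.inl i, Sum.inl p => if p.1.2 = i then 2 else 0
    | Sum.inl i, Sum.inr (Sum.inl a) => if a = i then 1 else 0
    | Sum.inl _, _ => 0
    | Sum.inr (Sum.inl j), Sum.inr (Sum.inr (Sum.inr (Sum.inl a))) =>
        if a = j then 2 else 0
    | Sum.inr (Sum.inl j), Sum.inr (Sum.inr (Sum.inl (_, b))) =>
        if b = j then 1 else 0
    | Sum.inr (Sum.inl _), _ => 0
    | Sum.inr (Sum.inr j), Sum.inr (Sum.inr (Sum.inr (Sum.inr a))) =>
        if a = j then 1 else 0
    | Sum.inr (Sum.inr _), _ => 0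

end PrefInst


set_option linter.unusedSectionVars false
set_option maxHeartbeats 4000000

namespace PrefInst
section Aux
open Finset
open scoped Classical
variable {U W E : Type} [DecidableEq U] [DecidableEq W] [DecidableEq E]

theorem mU_eq_some {I : PrefInst U W E} {M : Finset E} (hM : I.IsMatching M)
    {e : E} (he : e ∈ M) : I.mU M (I.src e) = some e := by
  have h : M.filter (fun f => I.src f = I.src e) = {e} := by
    ext f
    simp only [mem_filter, mem_singleton]
    constructor
    · rintro ⟨hf, hsf⟩
      by_contra hne
      exact (hM f hf e he hne).1 hsf
    · rintro rfl; exact ⟨he, rfl⟩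
  rw [mU, h]
  simp

theorem mW_eq_some {I : PrefInst U W E} {M : Finset E} (hM : I.IsMatching M)
    {e : E} (he : e ∈ M) : I.mW M (I.dst e) = some e := by
  have h : M.filter (fun f => I.dst f = I.dst e) = {e} := by
    ext f
    simp only [mem_filter, mem_singleton]
    constructor
    · rintro ⟨hf, hsf⟩
      by_contra hne
      exact (hM f hf e he hne).2 hsf
    · rintro rfl; exact ⟨he, rfl⟩
  rw [mW, h]
  simp

theorem mU_mem {I : PrefInst U W E} {M : Finset E} {u : U} {e : E}
    (h : I.mU M u = some e) : e ∈ M ∧ I.src e = u := by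
  have h1 : e ∈ (M.filter fun f => I.src f = u).toList :=
    List.mem_of_mem_head? (Option.mem_def.mpr h)
  simpa using Finset.mem_toList.mp h1

theorem mW_mem {I : PrefInst U W E} {M : Finset E} {w : W} {e : E}
    (h : I.mW M w = some e) : e ∈ M ∧ I.dst e = w := by
  have h1 : e ∈ (M.filter fun f => I.dst f = w).toList :=
    List.mem_of_mem_head? (Option.mem_def.mpr h)
  simpa using Finset.mem_toList.mp h1

theorem mU_eq_none {I : PrefInst U W E} {M : Finset E} {u : U}
    (h : ∀ e ∈ M, I.src e ≠ u) : I.mU M u = none := by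
  have h2 : M.filter (fun e => I.src e = u) = ∅ := filter_eq_empty_iff.mpr h
  rw [mU, h2]; simp

theorem mW_eq_none {I : PrefInst U W E} {M : Finset E} {w : W}
    (h : ∀ e ∈ M, I.dst e ≠ w) : I.mW M w = none := by
  have h2 : M.filter (fun e => I.dst e = w) = ∅ := filter_eq_empty_iff.mpr h
  rw [mW, h2]; simp

theorem mU_congr {I : PrefInst U W E} {M N : Finset E} {u : U}
    (h : ∀ e, I.src e = u → (e ∈ M ↔ e ∈ N)) : I.mU M u = I.mU N u := by
  have h2 : M.filter (fun e => I.src e = u) = N.filter (fun e => I.src e = u) := by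
    ext e
    simp only [mem_filter]
    constructor
    · rintro ⟨he, hs⟩; exact ⟨(h e hs).mp he, hs⟩
    · rintro ⟨he, hs⟩; exact ⟨(h e hs).mpr he, hs⟩
  rw [mU, mU, h2]

theorem mW_congr {I : PrefInst U W E} {M N : Finset E} {w : W}
    (h : ∀ e, I.dst e = w → (e ∈ M ↔ e ∈ N)) : I.mW M w = I.mW N w := by
  have h2 : M.filter (fun e => I.dst e = w) = N.filter (fun e => I.dst e = w) := by
    ext e
    simp only [mem_filter]
    constructor
    · rintro ⟨he, hs⟩; exact ⟨(h e hs).mp he, hs⟩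
    · rintro ⟨he, hs⟩; exact ⟨(h e hs).mpr he, hs⟩
  rw [mW, mW, h2]

theorem eq_of_src {I : PrefInst U W E} {M : Finset E} (hM : I.IsMatching M)
    {e f : E} (he : e ∈ M) (hf : f ∈ M) (h : I.src e = I.src f) : e = f := by
  by_contra hne
  exact (hM e he f hf hne).1 h

theorem eq_of_dst {I : PrefInst U W E} {M : Finset E} (hM : I.IsMatching M)
    {e f : E} (he : e ∈ M) (hf : f ∈ M) (h : I.dst e = I.dst f) : e = f := by
  by_contra hne
  exact (hM e he f hf hne).2 h

theorem wVoteU_eq_zero {I : PrefInst U W E} {M N : Finset E} {u : U}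
    (h : I.mU M u = I.mU N u) : I.wVoteU M N u = 0 := if_pos h

theorem wVoteW_eq_zero {I : PrefInst U W E} {M N : Finset E} {w : W}
    (h : I.mW M w = I.mW N w) : I.wVoteW M N w = 0 := if_pos h

theorem wVoteU_eq_neg {I : PrefInst U W E} {M N : Finset E} {u : U}
    (h : I.valU u (I.mU M u) < I.valU u (I.mU N u)) : I.wVoteU M N u = -1 := by
  have hne : I.mU M u ≠ I.mU N u := fun he => by rw [he] at h; exact lt_irrefl _ h
  rw [wVoteU, if_neg hne, if_pos h]

theorem wVoteW_eq_neg {I : PrefInst U W E} {M N : Finset E} {w : W}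
    (h : I.valW w (I.mW M w) < I.valW w (I.mW N w)) : I.wVoteW M N w = -1 := by
  have hne : I.mW M w ≠ I.mW N w := fun he => by rw [he] at h; exact lt_irrefl _ h
  rw [wVoteW, if_neg hne, if_pos h]

theorem wVoteU_eq_one {I : PrefInst U W E} {M N : Finset E} {u : U}
    (hne : I.mU M u ≠ I.mU N u)
    (h : ¬ I.valU u (I.mU M u) < I.valU u (I.mU N u)) : I.wVoteU M N u = 1 := by
  rw [wVoteU, if_neg hne, if_neg h]

theorem wVoteW_eq_one {I : PrefInst U W E} {M N : Finset E} {w : W}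
    (hne : I.mW M w ≠ I.mW N w)
    (h : ¬ I.valW w (I.mW M w) < I.valW w (I.mW N w)) : I.wVoteW M N w = 1 := by
  rw [wVoteW, if_neg hne, if_neg h]

theorem isMatching_sdiff_union {I : PrefInst U W E} {M R S : Finset E}
    (hM : I.IsMatching M) (hS : I.IsMatching S)
    (hsep : ∀ e ∈ S, ∀ f ∈ M, f ∉ R → I.src e ≠ I.src f ∧ I.dst e ≠ I.dst f) :
    I.IsMatching ((M \ R) ∪ S) := by
  intro e he f hf hne
  simp only [mem_union, mem_sdiff] at he hf
  rcases he with ⟨heM, heR⟩ | heS <;> rcases hf with ⟨hfM, hfR⟩ | hfS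
  · exact hM e heM f hfM hne
  · exact (hsep f hfS e heM heR).imp Ne.symm Ne.symm
  · exact hsep e heS f hfM hfR
  · exact hS e heS f hfS hne

theorem sum_votes {α : Type} [Fintype α] (f : α → ℤ) (S : Finset α)
    (h : ∀ a ∉ S, f a = 0) : ∑ a, f a = ∑ a ∈ S, f a :=
  (Finset.sum_subset (subset_univ S) (fun a _ ha => h a ha)).symm

theorem sum_wVoteU_eq {I : PrefInst U W E} [Fintype U] [Fintype W] (M R S : Finset E) :
    (∑ u, I.wVoteU M ((M \ R) ∪ S) u)
      = ∑ u ∈ (R ∪ S).image I.src, I.wVoteU M ((M \ R) ∪ S) u := by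
  refine sum_votes _ _ (fun u hu => wVoteU_eq_zero (mU_congr (fun e hse => ?_)))
  have heR : e ∉ R := fun h => hu (Finset.mem_image.mpr ⟨e, Finset.mem_union_left _ h, hse⟩)
  have heS : e ∉ S := fun h => hu (Finset.mem_image.mpr ⟨e, Finset.mem_union_right _ h, hse⟩)
  simp [Finset.mem_union, Finset.mem_sdiff, heR, heS]

theorem sum_wVoteW_eq {I : PrefInst U W E} [Fintype U] [Fintype W] (M R S : Finset E) :
    (∑ w, I.wVoteW M ((M \ R) ∪ S) w)
      = ∑ w ∈ (R ∪ S).image I.dst, I.wVoteW M ((M \ R) ∪ S) w := by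
  refine sum_votes _ _ (fun w hw => wVoteW_eq_zero (mW_congr (fun e hse => ?_)))
  have heR : e ∉ R := fun h => hw (Finset.mem_image.mpr ⟨e, Finset.mem_union_left _ h, hse⟩)
  have heS : e ∉ S := fun h => hw (Finset.mem_image.mpr ⟨e, Finset.mem_union_right _ h, hse⟩)
  simp [Finset.mem_union, Finset.mem_sdiff, heR, heS]

end Aux
end PrefInst

open Finset in
/-- Slot assignment used for the counting argument: a `G`-edge occupies the slots
of both of its endpoints `u_i, w_j`; every other edge occupies one slot. -/
def inapxSlots (m : ℕ) (G : Finset (Fin (2 * m) × Fin (2 * m))) :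
    ({p : Fin (2 * m) × Fin (2 * m) // p ∈ G} ⊕ Fin (2 * m) ⊕
        (Fin (2 * m) × Fin m) ⊕ Fin m ⊕ Fin m) →
      Finset (Fin (2 * m) ⊕ Fin (2 * m) ⊕ Fin m) := fun e =>
  match e with
  | Sum.inl p => {Sum.inl p.1.1, Sum.inr (Sum.inl p.1.2)}
  | Sum.inr (Sum.inl i) => {Sum.inr (Sum.inl i)}
  | Sum.inr (Sum.inr (Sum.inl q)) => {Sum.inl q.1}
  | Sum.inr (Sum.inr (Sum.inr (Sum.inl a))) => {Sum.inr (Sum.inr a)}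
  | Sum.inr (Sum.inr (Sum.inr (Sum.inr a))) => {Sum.inr (Sum.inr a)}


set_option maxHeartbeats 1000000 in
open PrefInst in
private theorem inapxCaseA1 (m : ℕ) (G : Finset (Fin (2 * m) × Fin (2 * m)))
    (M' : Finset ({p : Fin (2 * m) × Fin (2 * m) // p ∈ G} ⊕ Fin (2 * m) ⊕
    (Fin (2 * m) × Fin m) ⊕ Fin m ⊕ Fin m))
    (hM' : (inapx m G).IsMatching M')
    (hpop : (inapx m G).WeaklyPopular M')
    (i j : Fin (2 * m)) (hp : (i, j) ∈ G)
    (h1 : (inapx m G).mU M' (Sum.inl i) = none)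
    (h2 : (inapx m G).mW M' (Sum.inl j) = none) : False := by
  have hfreeU : ∀ (u) (_ : (inapx m G).mU M' u = none) (f) (_ : f ∈ M'),
      (inapx m G).src f ≠ u := by
    intro u hu f hf hsf
    have h := PrefInst.mU_eq_some hM' hf
    rw [hsf, hu] at h
    cases h
  have hfreeW : ∀ (w) (_ : (inapx m G).mW M' w = none) (f) (_ : f ∈ M'),
      (inapx m G).dst f ≠ w := by
    intro w hw f hf hdf
    have h := PrefInst.mW_eq_some hM' hf
    rw [hdf, hw] at h
    cases h
  have hSm : (inapx m G).IsMatching {Sum.inl ⟨(i,j), hp⟩} := by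
    intro e he f hf hne
    simp only [Finset.mem_singleton] at he hf
    subst he; subst hf; exact absurd rfl hne
  have hsep : ∀ e ∈ ({Sum.inl ⟨(i,j), hp⟩} : Finset ({p : Fin (2 * m) × Fin (2 * m) // p ∈ G} ⊕ Fin (2 * m) ⊕
(Fin (2 * m) × Fin m) ⊕ Fin m ⊕ Fin m)), ∀ f ∈ M', f ∉ (∅ : Finset _) →
      (inapx m G).src e ≠ (inapx m G).src f ∧ (inapx m G).dst e ≠ (inapx m G).dst f := by
    intro e he f hf _
    simp only [Finset.mem_singleton] at he
    subst he
    constructor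
    · intro hs
      exact hfreeU _ h1 f hf hs.symm
    · intro hd
      exact hfreeW _ h2 f hf hd.symm
  have hNm := PrefInst.isMatching_sdiff_union hM' hSm hsep
  have hcon := hpop _ hNm
  have he0N : (Sum.inl ⟨(i,j), hp⟩ : {p : Fin (2 * m) × Fin (2 * m) // p ∈ G} ⊕ Fin (2 * m) ⊕
(Fin (2 * m) × Fin m) ⊕ Fin m ⊕ Fin m) ∈ (M' \ ∅) ∪ {Sum.inl ⟨(i,j), hp⟩} := by simp
  have hNu : (inapx m G).mU ((M' \ ∅) ∪ {Sum.inl ⟨(i,j), hp⟩}) (Sum.inl i)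
      = some (Sum.inl ⟨(i,j), hp⟩) := PrefInst.mU_eq_some hNm he0N
  have hNw : (inapx m G).mW ((M' \ ∅) ∪ {Sum.inl ⟨(i,j), hp⟩}) (Sum.inl j)
      = some (Sum.inl ⟨(i,j), hp⟩) := PrefInst.mW_eq_some hNm he0N
  have hUsum : (∑ u, (inapx m G).wVoteU M' ((M' \ ∅) ∪ {Sum.inl ⟨(i,j), hp⟩}) u) = -1 := by
    rw [PrefInst.sum_wVoteU_eq]
    have himg : (((∅ : Finset _) ∪ {Sum.inl ⟨(i,j), hp⟩}).image (inapx m G).src)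
        = {Sum.inl i} := by
      ext t; simp [inapx]
    rw [himg, Finset.sum_singleton]
    refine PrefInst.wVoteU_eq_neg ?_
    rw [h1, hNu]
    simp [PrefInst.valU, inapx]
  have hWsum : (∑ w, (inapx m G).wVoteW M' ((M' \ ∅) ∪ {Sum.inl ⟨(i,j), hp⟩}) w) = -1 := by
    rw [PrefInst.sum_wVoteW_eq]
    have himg : (((∅ : Finset _) ∪ {Sum.inl ⟨(i,j), hp⟩}).image (inapx m G).dst)
        = {Sum.inl j} := by
      ext t; simp [inapx]
    rw [himg, Finset.sum_singleton]
    refine PrefInst.wVoteW_eq_neg ?_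
    rw [h2, hNw]
    simp [PrefInst.valW, inapx]
  rw [hUsum, hWsum] at hcon
  norm_num at hcon

set_option maxHeartbeats 1000000 in
open PrefInst in
private theorem inapxCaseA2 (m : ℕ) (G : Finset (Fin (2 * m) × Fin (2 * m)))
    (M' : Finset ({p : Fin (2 * m) × Fin (2 * m) // p ∈ G} ⊕ Fin (2 * m) ⊕
    (Fin (2 * m) × Fin m) ⊕ Fin m ⊕ Fin m))
    (hM' : (inapx m G).IsMatching M')
    (hpop : (inapx m G).WeaklyPopular M')
    (i j : Fin (2 * m)) (hp : (i, j) ∈ G)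
    (h1 : (inapx m G).mU M' (Sum.inl i) = none)
    (hdM : (Sum.inr (Sum.inl j) : {p : Fin (2 * m) × Fin (2 * m) // p ∈ G} ⊕ Fin (2 * m) ⊕
    (Fin (2 * m) × Fin m) ⊕ Fin m ⊕ Fin m) ∈ M') : False := by
  have hfreeU : ∀ (u) (_ : (inapx m G).mU M' u = none) (f) (_ : f ∈ M'),
      (inapx m G).src f ≠ u := by
    intro u hu f hf hsf
    have h := PrefInst.mU_eq_some hM' hf
    rw [hsf, hu] at h
    cases h
  have h2 : (inapx m G).mW M' (Sum.inl j) = some (Sum.inr (Sum.inl j)) :=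
    PrefInst.mW_eq_some hM' hdM
  have hSm : (inapx m G).IsMatching {Sum.inl ⟨(i,j), hp⟩} := by
    intro e he f hf hne
    simp only [Finset.mem_singleton] at he hf
    subst he; subst hf; exact absurd rfl hne
  have hsep : ∀ e ∈ ({Sum.inl ⟨(i,j), hp⟩} : Finset ({p : Fin (2 * m) × Fin (2 * m) // p ∈ G} ⊕ Fin (2 * m) ⊕
(Fin (2 * m) × Fin m) ⊕ Fin m ⊕ Fin m)), ∀ f ∈ M',
      f ∉ ({Sum.inr (Sum.inl j)} : Finset ({p : Fin (2 * m) × Fin (2 * m) // p ∈ G} ⊕ Fin (2 * m) ⊕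
(Fin (2 * m) × Fin m) ⊕ Fin m ⊕ Fin m)) →
      (inapx m G).src e ≠ (inapx m G).src f ∧ (inapx m G).dst e ≠ (inapx m G).dst f := by
    intro e he f hf hfR
    simp only [Finset.mem_singleton] at he
    subst he
    constructor
    · intro hs
      exact hfreeU _ h1 f hf hs.symm
    · intro hd
      exact hfR (by
        rw [PrefInst.eq_of_dst hM' hf hdM hd.symm]
        exact Finset.mem_singleton_self _)
  have hNm := PrefInst.isMatching_sdiff_union hM' hSm hsep
  have hcon := hpop _ hNm
  have he0N : (Sum.inl ⟨(i,j), hp⟩ : {p : Fin (2 * m) × Fin (2 * m) // p ∈ G} ⊕ Fin (2 * m) ⊕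
(Fin (2 * m) × Fin m) ⊕ Fin m ⊕ Fin m)
      ∈ (M' \ {Sum.inr (Sum.inl j)}) ∪ {Sum.inl ⟨(i,j), hp⟩} := by simp
  have hNu : (inapx m G).mU ((M' \ {Sum.inr (Sum.inl j)}) ∪ {Sum.inl ⟨(i,j), hp⟩}) (Sum.inl i)
      = some (Sum.inl ⟨(i,j), hp⟩) := PrefInst.mU_eq_some hNm he0N
  have hNw : (inapx m G).mW ((M' \ {Sum.inr (Sum.inl j)}) ∪ {Sum.inl ⟨(i,j), hp⟩}) (Sum.inl j)
      = some (Sum.inl ⟨(i,j), hp⟩) := PrefInst.mW_eq_some hNm he0N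
  have hMw' : (inapx m G).mU M' (Sum.inr (Sum.inl j)) = some (Sum.inr (Sum.inl j)) :=
    PrefInst.mU_eq_some hM' hdM
  have hNw' : (inapx m G).mU ((M' \ {Sum.inr (Sum.inl j)}) ∪ {Sum.inl ⟨(i,j), hp⟩})
      (Sum.inr (Sum.inl j)) = none := by
    refine PrefInst.mU_eq_none ?_
    intro e heN hse
    rcases Finset.mem_union.mp heN with h' | h'
    · obtain ⟨heM, heR⟩ := Finset.mem_sdiff.mp h'
      exact heR (by
        rw [PrefInst.eq_of_src hM' heM hdM hse]
        exact Finset.mem_singleton_self _)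
    · simp only [Finset.mem_singleton] at h'
      subst h'
      simp [inapx] at hse
  have hUsum : (∑ u, (inapx m G).wVoteU M'
      ((M' \ {Sum.inr (Sum.inl j)}) ∪ {Sum.inl ⟨(i,j), hp⟩}) u) = 0 := by
    rw [PrefInst.sum_wVoteU_eq]
    have himg : ((({Sum.inr (Sum.inl j)} : Finset ({p : Fin (2 * m) × Fin (2 * m) // p ∈ G} ⊕ Fin (2 * m) ⊕
(Fin (2 * m) × Fin m) ⊕ Fin m ⊕ Fin m)) ∪ {Sum.inl ⟨(i,j), hp⟩}).image
        (inapx m G).src) = {Sum.inl i, Sum.inr (Sum.inl j)} := by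
      ext t; simp [inapx] <;> tauto
    rw [himg, Finset.sum_insert (by simp), Finset.sum_singleton]
    have v1 : (inapx m G).wVoteU M'
        ((M' \ {Sum.inr (Sum.inl j)}) ∪ {Sum.inl ⟨(i,j), hp⟩}) (Sum.inl i) = -1 := by
      refine PrefInst.wVoteU_eq_neg ?_
      rw [h1, hNu]
      norm_num [PrefInst.valU, inapx]
    have v2 : (inapx m G).wVoteU M'
        ((M' \ {Sum.inr (Sum.inl j)}) ∪ {Sum.inl ⟨(i,j), hp⟩}) (Sum.inr (Sum.inl j)) = 1 := by
      refine PrefInst.wVoteU_eq_one (by rw [hMw', hNw']; simp) ?_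
      rw [hMw', hNw']
      norm_num [PrefInst.valU, inapx]
    rw [v1, v2]
    norm_num
  have hWsum : (∑ w, (inapx m G).wVoteW M'
      ((M' \ {Sum.inr (Sum.inl j)}) ∪ {Sum.inl ⟨(i,j), hp⟩}) w) = -1 := by
    rw [PrefInst.sum_wVoteW_eq]
    have himg : ((({Sum.inr (Sum.inl j)} : Finset ({p : Fin (2 * m) × Fin (2 * m) // p ∈ G} ⊕ Fin (2 * m) ⊕
(Fin (2 * m) × Fin m) ⊕ Fin m ⊕ Fin m)) ∪ {Sum.inl ⟨(i,j), hp⟩}).image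
        (inapx m G).dst) = {Sum.inl j} := by
      ext t; simp [inapx] <;> tauto
    rw [himg, Finset.sum_singleton]
    refine PrefInst.wVoteW_eq_neg ?_
    rw [h2, hNw]
    norm_num [PrefInst.valW, inapx]
  rw [hUsum, hWsum] at hcon
  norm_num at hcon
    
set_option maxHeartbeats 1000000 in
open PrefInst in
private theorem inapxCaseB0 (m : ℕ) (G : Finset (Fin (2 * m) × Fin (2 * m)))
    (M' : Finset ({p : Fin (2 * m) × Fin (2 * m) // p ∈ G} ⊕ Fin (2 * m) ⊕
    (Fin (2 * m) × Fin m) ⊕ Fin m ⊕ Fin m))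
    (hM' : (inapx m G).IsMatching M')
    (hpop : (inapx m G).WeaklyPopular M')
    (b : Fin m)
    (h3 : (inapx m G).mU M' (Sum.inr (Sum.inr b)) = none) : False := by
  have hfreeU : ∀ (u) (_ : (inapx m G).mU M' u = none) (f) (_ : f ∈ M'),
      (inapx m G).src f ≠ u := by
    intro u hu f hf hsf
    have h := PrefInst.mU_eq_some hM' hf
    rw [hsf, hu] at h
    cases h
  have hfreeW : ∀ (w) (_ : (inapx m G).mW M' w = none) (f) (_ : f ∈ M'),
      (inapx m G).dst f ≠ w := by
    intro w hw f hf hdf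
    have h := PrefInst.mW_eq_some hM' hf
    rw [hdf, hw] at h
    cases h
  have hz' : (inapx m G).mW M' (Sum.inr (Sum.inr b)) = none := by
    refine PrefInst.mW_eq_none ?_
    intro e he hde
    rcases e with q | i1 | ⟨i1, b1⟩ | a | a <;> simp [inapx] at hde
    exact hfreeU _ h3 _ he (by simp [inapx, hde])
  have hSm : (inapx m G).IsMatching {(Sum.inr (Sum.inr (Sum.inr (Sum.inr b))) : {p : Fin (2 * m) × Fin (2 * m) // p ∈ G} ⊕ Fin (2 * m) ⊕
(Fin (2 * m) × Fin m) ⊕ Fin m ⊕ Fin m)} := by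
    intro e he f hf hne
    simp only [Finset.mem_singleton] at he hf
    subst he; subst hf; exact absurd rfl hne
  have hsep : ∀ e ∈ ({Sum.inr (Sum.inr (Sum.inr (Sum.inr b)))} : Finset ({p : Fin (2 * m) × Fin (2 * m) // p ∈ G} ⊕ Fin (2 * m) ⊕
(Fin (2 * m) × Fin m) ⊕ Fin m ⊕ Fin m)), ∀ f ∈ M',
      f ∉ (∅ : Finset _) →
      (inapx m G).src e ≠ (inapx m G).src f ∧ (inapx m G).dst e ≠ (inapx m G).dst f := by
    intro e he f hf _
    simp only [Finset.mem_singleton] at he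
    subst he
    constructor
    · intro hs
      exact hfreeU _ h3 f hf hs.symm
    · intro hd
      exact hfreeW _ hz' f hf hd.symm
  have hNm := PrefInst.isMatching_sdiff_union hM' hSm hsep
  have hcon := hpop _ hNm
  have he0N : (Sum.inr (Sum.inr (Sum.inr (Sum.inr b))) : {p : Fin (2 * m) × Fin (2 * m) // p ∈ G} ⊕ Fin (2 * m) ⊕
(Fin (2 * m) × Fin m) ⊕ Fin m ⊕ Fin m)
      ∈ (M' \ ∅) ∪ {Sum.inr (Sum.inr (Sum.inr (Sum.inr b)))} := by simp
  have hNu : (inapx m G).mU ((M' \ ∅) ∪ {Sum.inr (Sum.inr (Sum.inr (Sum.inr b)))})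
      (Sum.inr (Sum.inr b)) = some (Sum.inr (Sum.inr (Sum.inr (Sum.inr b)))) :=
    PrefInst.mU_eq_some hNm he0N
  have hNw : (inapx m G).mW ((M' \ ∅) ∪ {Sum.inr (Sum.inr (Sum.inr (Sum.inr b)))})
      (Sum.inr (Sum.inr b)) = some (Sum.inr (Sum.inr (Sum.inr (Sum.inr b)))) :=
    PrefInst.mW_eq_some hNm he0N
  have hUsum : (∑ u, (inapx m G).wVoteU M'
      ((M' \ ∅) ∪ {Sum.inr (Sum.inr (Sum.inr (Sum.inr b)))}) u) = -1 := by
    rw [PrefInst.sum_wVoteU_eq]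
    have himg : (((∅ : Finset ({p : Fin (2 * m) × Fin (2 * m) // p ∈ G} ⊕ Fin (2 * m) ⊕
(Fin (2 * m) × Fin m) ⊕ Fin m ⊕ Fin m)) ∪ {Sum.inr (Sum.inr (Sum.inr (Sum.inr b)))}).image
        (inapx m G).src) = {Sum.inr (Sum.inr b)} := by
      ext t; simp [inapx] <;> tauto
    rw [himg, Finset.sum_singleton]
    refine PrefInst.wVoteU_eq_neg ?_
    rw [h3, hNu]
    norm_num [PrefInst.valU, inapx]
  have hWsum : (∑ w, (inapx m G).wVoteW M'
      ((M' \ ∅) ∪ {Sum.inr (Sum.inr (Sum.inr (Sum.inr b)))}) w) = -1 := by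
    rw [PrefInst.sum_wVoteW_eq]
    have himg : (((∅ : Finset ({p : Fin (2 * m) × Fin (2 * m) // p ∈ G} ⊕ Fin (2 * m) ⊕
(Fin (2 * m) × Fin m) ⊕ Fin m ⊕ Fin m)) ∪ {Sum.inr (Sum.inr (Sum.inr (Sum.inr b)))}).image
        (inapx m G).dst) = {Sum.inr (Sum.inr b)} := by
      ext t; simp [inapx] <;> tauto
    rw [himg, Finset.sum_singleton]
    refine PrefInst.wVoteW_eq_neg ?_
    rw [hz', hNw]
    norm_num [PrefInst.valW, inapx]
  rw [hUsum, hWsum] at hcon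
  norm_num at hcon

set_option maxHeartbeats 1000000 in
open PrefInst in
private theorem inapxCaseB1 (m : ℕ) (G : Finset (Fin (2 * m) × Fin (2 * m)))
    (M' : Finset ({p : Fin (2 * m) × Fin (2 * m) // p ∈ G} ⊕ Fin (2 * m) ⊕
    (Fin (2 * m) × Fin m) ⊕ Fin m ⊕ Fin m))
    (hM' : (inapx m G).IsMatching M')
    (hpop : (inapx m G).WeaklyPopular M')
    (i j : Fin (2 * m)) (hp : (i, j) ∈ G) (b : Fin m)
    (hcM : (Sum.inr (Sum.inr (Sum.inl (i, b))) : {p : Fin (2 * m) × Fin (2 * m) // p ∈ G} ⊕ Fin (2 * m) ⊕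
    (Fin (2 * m) × Fin m) ⊕ Fin m ⊕ Fin m) ∈ M')
    (hfM : (Sum.inr (Sum.inr (Sum.inr (Sum.inr b))) : {p : Fin (2 * m) × Fin (2 * m) // p ∈ G} ⊕ Fin (2 * m) ⊕
    (Fin (2 * m) × Fin m) ⊕ Fin m ⊕ Fin m) ∈ M')
    (h2 : (inapx m G).mW M' (Sum.inl j) = none) : False := by
  have hfreeW : ∀ (w) (_ : (inapx m G).mW M' w = none) (f) (_ : f ∈ M'),
      (inapx m G).dst f ≠ w := by
    intro w hw f hf hdf
    have h := PrefInst.mW_eq_some hM' hf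
    rw [hdf, hw] at h
    cases h
  have h1 : (inapx m G).mU M' (Sum.inl i) = some (Sum.inr (Sum.inr (Sum.inl (i, b)))) :=
    PrefInst.mU_eq_some hM' hcM
  have h3 : (inapx m G).mU M' (Sum.inr (Sum.inr b))
      = some (Sum.inr (Sum.inr (Sum.inr (Sum.inr b)))) := PrefInst.mU_eq_some hM' hfM
  have hSm : (inapx m G).IsMatching ({Sum.inl ⟨(i,j), hp⟩, Sum.inr (Sum.inr (Sum.inr (Sum.inl b)))} : Finset ({p : Fin (2 * m) × Fin (2 * m) // p ∈ G} ⊕ Fin (2 * m) ⊕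
      (Fin (2 * m) × Fin m) ⊕ Fin m ⊕ Fin m)) := by
    intro e he f hf hne
    simp only [Finset.mem_insert, Finset.mem_singleton] at he hf
    rcases he with rfl | rfl <;> rcases hf with rfl | rfl
    · exact absurd rfl hne
    · exact ⟨by simp [inapx], by simp [inapx]⟩
    · exact ⟨by simp [inapx], by simp [inapx]⟩
    · exact absurd rfl hne
  have hsep : ∀ e ∈ ({Sum.inl ⟨(i,j), hp⟩, Sum.inr (Sum.inr (Sum.inr (Sum.inl b)))} : Finset ({p : Fin (2 * m) × Fin (2 * m) // p ∈ G} ⊕ Fin (2 * m) ⊕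
      (Fin (2 * m) × Fin m) ⊕ Fin m ⊕ Fin m)), ∀ f ∈ M',
      f ∉ ({Sum.inr (Sum.inr (Sum.inl (i, b))), Sum.inr (Sum.inr (Sum.inr (Sum.inr b)))} : Finset ({p : Fin (2 * m) × Fin (2 * m) // p ∈ G} ⊕ Fin (2 * m) ⊕
      (Fin (2 * m) × Fin m) ⊕ Fin m ⊕ Fin m)) →
      (inapx m G).src e ≠ (inapx m G).src f ∧ (inapx m G).dst e ≠ (inapx m G).dst f := by
    intro e he f hf hfR
    simp only [Finset.mem_insert, Finset.mem_singleton] at he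
    rcases he with rfl | rfl
    · constructor
      · intro hs
        exact hfR (by
          rw [PrefInst.eq_of_src hM' hf hcM hs.symm]
          simp)
      · intro hd
        exact hfreeW _ h2 f hf hd.symm
    · constructor
      · intro hs
        exact hfR (by
          rw [PrefInst.eq_of_src hM' hf hfM hs.symm]
          simp)
      · intro hd
        exact hfR (by
          rw [PrefInst.eq_of_dst hM' hf hcM hd.symm]
          simp)
  have hNm := PrefInst.isMatching_sdiff_union hM' hSm hsep
  have hcon := hpop _ hNm
  have he0N : (Sum.inl ⟨(i,j), hp⟩ : {p : Fin (2 * m) × Fin (2 * m) // p ∈ G} ⊕ Fin (2 * m) ⊕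
      (Fin (2 * m) × Fin m) ⊕ Fin m ⊕ Fin m) ∈ (M' \ {Sum.inr (Sum.inr (Sum.inl (i, b))), Sum.inr (Sum.inr (Sum.inr (Sum.inr b)))}) ∪ {Sum.inl ⟨(i,j), hp⟩, Sum.inr (Sum.inr (Sum.inr (Sum.inl b)))} := by simp
  have heuzN : (Sum.inr (Sum.inr (Sum.inr (Sum.inl b))) : {p : Fin (2 * m) × Fin (2 * m) // p ∈ G} ⊕ Fin (2 * m) ⊕
      (Fin (2 * m) × Fin m) ⊕ Fin m ⊕ Fin m) ∈ (M' \ {Sum.inr (Sum.inr (Sum.inl (i, b))), Sum.inr (Sum.inr (Sum.inr (Sum.inr b)))}) ∪ {Sum.inl ⟨(i,j), hp⟩, Sum.inr (Sum.inr (Sum.inr (Sum.inl b)))} := by simp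
  have hNu : (inapx m G).mU ((M' \ {Sum.inr (Sum.inr (Sum.inl (i, b))), Sum.inr (Sum.inr (Sum.inr (Sum.inr b)))}) ∪ {Sum.inl ⟨(i,j), hp⟩, Sum.inr (Sum.inr (Sum.inr (Sum.inl b)))}) (Sum.inl i) = some (Sum.inl ⟨(i,j), hp⟩) :=
    PrefInst.mU_eq_some hNm he0N
  have hNz : (inapx m G).mU ((M' \ {Sum.inr (Sum.inr (Sum.inl (i, b))), Sum.inr (Sum.inr (Sum.inr (Sum.inr b)))}) ∪ {Sum.inl ⟨(i,j), hp⟩, Sum.inr (Sum.inr (Sum.inr (Sum.inl b)))}) (Sum.inr (Sum.inr b))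
      = some (Sum.inr (Sum.inr (Sum.inr (Sum.inl b)))) := PrefInst.mU_eq_some hNm heuzN
  have hNw : (inapx m G).mW ((M' \ {Sum.inr (Sum.inr (Sum.inl (i, b))), Sum.inr (Sum.inr (Sum.inr (Sum.inr b)))}) ∪ {Sum.inl ⟨(i,j), hp⟩, Sum.inr (Sum.inr (Sum.inr (Sum.inl b)))}) (Sum.inl j) = some (Sum.inl ⟨(i,j), hp⟩) :=
    PrefInst.mW_eq_some hNm he0N
  have hNub : (inapx m G).mW ((M' \ {Sum.inr (Sum.inr (Sum.inl (i, b))), Sum.inr (Sum.inr (Sum.inr (Sum.inr b)))}) ∪ {Sum.inl ⟨(i,j), hp⟩, Sum.inr (Sum.inr (Sum.inr (Sum.inl b)))}) (Sum.inr (Sum.inl b))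
      = some (Sum.inr (Sum.inr (Sum.inr (Sum.inl b)))) := PrefInst.mW_eq_some hNm heuzN
  have hMub : (inapx m G).mW M' (Sum.inr (Sum.inl b))
      = some (Sum.inr (Sum.inr (Sum.inl (i, b)))) := PrefInst.mW_eq_some hM' hcM
  have hMzb : (inapx m G).mW M' (Sum.inr (Sum.inr b))
      = some (Sum.inr (Sum.inr (Sum.inr (Sum.inr b)))) := PrefInst.mW_eq_some hM' hfM
  have hNzb : (inapx m G).mW ((M' \ {Sum.inr (Sum.inr (Sum.inl (i, b))), Sum.inr (Sum.inr (Sum.inr (Sum.inr b)))}) ∪ {Sum.inl ⟨(i,j), hp⟩, Sum.inr (Sum.inr (Sum.inr (Sum.inl b)))}) (Sum.inr (Sum.inr b)) = none := by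
    refine PrefInst.mW_eq_none ?_
    intro e heN hde
    rcases Finset.mem_union.mp heN with h' | h'
    · obtain ⟨heM, heR⟩ := Finset.mem_sdiff.mp h'
      exact heR (by
        rw [PrefInst.eq_of_dst hM' heM hfM hde]
        simp)
    · simp only [Finset.mem_insert, Finset.mem_singleton] at h'
      rcases h' with rfl | rfl <;> simp [inapx] at hde
  have hUsum : (∑ u, (inapx m G).wVoteU M' ((M' \ {Sum.inr (Sum.inr (Sum.inl (i, b))), Sum.inr (Sum.inr (Sum.inr (Sum.inr b)))}) ∪ {Sum.inl ⟨(i,j), hp⟩, Sum.inr (Sum.inr (Sum.inr (Sum.inl b)))}) u) = -2 := by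
    rw [PrefInst.sum_wVoteU_eq]
    have himg : ((({Sum.inr (Sum.inr (Sum.inl (i, b))), Sum.inr (Sum.inr (Sum.inr (Sum.inr b)))} : Finset ({p : Fin (2 * m) × Fin (2 * m) // p ∈ G} ⊕ Fin (2 * m) ⊕
      (Fin (2 * m) × Fin m) ⊕ Fin m ⊕ Fin m)) ∪ {Sum.inl ⟨(i,j), hp⟩, Sum.inr (Sum.inr (Sum.inr (Sum.inl b)))}).image
        (inapx m G).src) = {Sum.inl i, Sum.inr (Sum.inr b)} := by
      ext t; simp [inapx] <;> tauto
    have v1 : (inapx m G).wVoteU M' ((M' \ {Sum.inr (Sum.inr (Sum.inl (i, b))), Sum.inr (Sum.inr (Sum.inr (Sum.inr b)))}) ∪ {Sum.inl ⟨(i,j), hp⟩, Sum.inr (Sum.inr (Sum.inr (Sum.inl b)))}) (Sum.inl i) = -1 := by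
      refine PrefInst.wVoteU_eq_neg ?_
      rw [h1, hNu]
      norm_num [PrefInst.valU, inapx]
    have v3 : (inapx m G).wVoteU M' ((M' \ {Sum.inr (Sum.inr (Sum.inl (i, b))), Sum.inr (Sum.inr (Sum.inr (Sum.inr b)))}) ∪ {Sum.inl ⟨(i,j), hp⟩, Sum.inr (Sum.inr (Sum.inr (Sum.inl b)))}) (Sum.inr (Sum.inr b)) = -1 := by
      refine PrefInst.wVoteU_eq_neg ?_
      rw [h3, hNz]
      norm_num [PrefInst.valU, inapx]
    rw [himg, Finset.sum_insert (by simp), Finset.sum_singleton]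
    rw [v1, v3]
    norm_num
  have hWsum : (∑ w, (inapx m G).wVoteW M' ((M' \ {Sum.inr (Sum.inr (Sum.inl (i, b))), Sum.inr (Sum.inr (Sum.inr (Sum.inr b)))}) ∪ {Sum.inl ⟨(i,j), hp⟩, Sum.inr (Sum.inr (Sum.inr (Sum.inl b)))}) w) = -1 := by
    rw [PrefInst.sum_wVoteW_eq]
    have himg : ((({Sum.inr (Sum.inr (Sum.inl (i, b))), Sum.inr (Sum.inr (Sum.inr (Sum.inr b)))} : Finset ({p : Fin (2 * m) × Fin (2 * m) // p ∈ G} ⊕ Fin (2 * m) ⊕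
      (Fin (2 * m) × Fin m) ⊕ Fin m ⊕ Fin m)) ∪ {Sum.inl ⟨(i,j), hp⟩, Sum.inr (Sum.inr (Sum.inr (Sum.inl b)))}).image
        (inapx m G).dst) = ({Sum.inl j, Sum.inr (Sum.inl b), Sum.inr (Sum.inr b)} : Finset _) := by
      ext t; simp [inapx] <;> tauto
    have w1 : (inapx m G).wVoteW M' ((M' \ {Sum.inr (Sum.inr (Sum.inl (i, b))), Sum.inr (Sum.inr (Sum.inr (Sum.inr b)))}) ∪ {Sum.inl ⟨(i,j), hp⟩, Sum.inr (Sum.inr (Sum.inr (Sum.inl b)))}) (Sum.inl j) = -1 := by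
      refine PrefInst.wVoteW_eq_neg ?_
      rw [h2, hNw]
      norm_num [PrefInst.valW, inapx]
    have w2 : (inapx m G).wVoteW M' ((M' \ {Sum.inr (Sum.inr (Sum.inl (i, b))), Sum.inr (Sum.inr (Sum.inr (Sum.inr b)))}) ∪ {Sum.inl ⟨(i,j), hp⟩, Sum.inr (Sum.inr (Sum.inr (Sum.inl b)))}) (Sum.inr (Sum.inl b)) = -1 := by
      refine PrefInst.wVoteW_eq_neg ?_
      rw [hMub, hNub]
      norm_num [PrefInst.valW, inapx]
    have w3 : (inapx m G).wVoteW M' ((M' \ {Sum.inr (Sum.inr (Sum.inl (i, b))), Sum.inr (Sum.inr (Sum.inr (Sum.inr b)))}) ∪ {Sum.inl ⟨(i,j), hp⟩, Sum.inr (Sum.inr (Sum.inr (Sum.inl b)))}) (Sum.inr (Sum.inr b)) = 1 := by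
      refine PrefInst.wVoteW_eq_one (by rw [hMzb, hNzb]; simp) ?_
      rw [hMzb, hNzb]
      norm_num [PrefInst.valW, inapx]
    rw [himg, Finset.sum_insert (by simp), Finset.sum_insert (by simp),
      Finset.sum_singleton, w1, w2, w3]
    norm_num
  rw [hUsum, hWsum] at hcon
  norm_num at hcon

set_option maxHeartbeats 1000000 in
open PrefInst in
private theorem inapxCaseB2 (m : ℕ) (G : Finset (Fin (2 * m) × Fin (2 * m)))
    (M' : Finset ({p : Fin (2 * m) × Fin (2 * m) // p ∈ G} ⊕ Fin (2 * m) ⊕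
    (Fin (2 * m) × Fin m) ⊕ Fin m ⊕ Fin m))
    (hM' : (inapx m G).IsMatching M')
    (hpop : (inapx m G).WeaklyPopular M')
    (i j : Fin (2 * m)) (hp : (i, j) ∈ G) (b : Fin m)
    (hcM : (Sum.inr (Sum.inr (Sum.inl (i, b))) : {p : Fin (2 * m) × Fin (2 * m) // p ∈ G} ⊕ Fin (2 * m) ⊕
    (Fin (2 * m) × Fin m) ⊕ Fin m ⊕ Fin m) ∈ M')
    (hfM : (Sum.inr (Sum.inr (Sum.inr (Sum.inr b))) : {p : Fin (2 * m) × Fin (2 * m) // p ∈ G} ⊕ Fin (2 * m) ⊕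
    (Fin (2 * m) × Fin m) ⊕ Fin m ⊕ Fin m) ∈ M')
    (hdM : (Sum.inr (Sum.inl j) : {p : Fin (2 * m) × Fin (2 * m) // p ∈ G} ⊕ Fin (2 * m) ⊕
    (Fin (2 * m) × Fin m) ⊕ Fin m ⊕ Fin m) ∈ M') : False := by
  have h1 : (inapx m G).mU M' (Sum.inl i) = some (Sum.inr (Sum.inr (Sum.inl (i, b)))) :=
    PrefInst.mU_eq_some hM' hcM
  have h3 : (inapx m G).mU M' (Sum.inr (Sum.inr b))
      = some (Sum.inr (Sum.inr (Sum.inr (Sum.inr b)))) := PrefInst.mU_eq_some hM' hfM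
  have h2 : (inapx m G).mW M' (Sum.inl j) = some (Sum.inr (Sum.inl j)) :=
    PrefInst.mW_eq_some hM' hdM
  have hSm : (inapx m G).IsMatching ({Sum.inl ⟨(i,j), hp⟩, Sum.inr (Sum.inr (Sum.inr (Sum.inl b)))} : Finset ({p : Fin (2 * m) × Fin (2 * m) // p ∈ G} ⊕ Fin (2 * m) ⊕
      (Fin (2 * m) × Fin m) ⊕ Fin m ⊕ Fin m)) := by
    intro e he f hf hne
    simp only [Finset.mem_insert, Finset.mem_singleton] at he hf
    rcases he with rfl | rfl <;> rcases hf with rfl | rfl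
    · exact absurd rfl hne
    · exact ⟨by simp [inapx], by simp [inapx]⟩
    · exact ⟨by simp [inapx], by simp [inapx]⟩
    · exact absurd rfl hne
  have hsep : ∀ e ∈ ({Sum.inl ⟨(i,j), hp⟩, Sum.inr (Sum.inr (Sum.inr (Sum.inl b)))} : Finset ({p : Fin (2 * m) × Fin (2 * m) // p ∈ G} ⊕ Fin (2 * m) ⊕
      (Fin (2 * m) × Fin m) ⊕ Fin m ⊕ Fin m)), ∀ f ∈ M',
      f ∉ ({Sum.inr (Sum.inr (Sum.inl (i, b))), Sum.inr (Sum.inl j), Sum.inr (Sum.inr (Sum.inr (Sum.inr b)))} : Finset ({p : Fin (2 * m) × Fin (2 * m) // p ∈ G} ⊕ Fin (2 * m) ⊕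
      (Fin (2 * m) × Fin m) ⊕ Fin m ⊕ Fin m)) →
      (inapx m G).src e ≠ (inapx m G).src f ∧ (inapx m G).dst e ≠ (inapx m G).dst f := by
    intro e he f hf hfR
    simp only [Finset.mem_insert, Finset.mem_singleton] at he
    rcases he with rfl | rfl
    · constructor
      · intro hs
        exact hfR (by
          rw [PrefInst.eq_of_src hM' hf hcM hs.symm]
          simp)
      · intro hd
        exact hfR (by
          rw [PrefInst.eq_of_dst hM' hf hdM hd.symm]
          simp)
    · constructor
      · intro hs
        exact hfR (by
          rw [PrefInst.eq_of_src hM' hf hfM hs.symm]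
          simp)
      · intro hd
        exact hfR (by
          rw [PrefInst.eq_of_dst hM' hf hcM hd.symm]
          simp)
  have hNm := PrefInst.isMatching_sdiff_union hM' hSm hsep
  have hcon := hpop _ hNm
  have he0N : (Sum.inl ⟨(i,j), hp⟩ : {p : Fin (2 * m) × Fin (2 * m) // p ∈ G} ⊕ Fin (2 * m) ⊕
      (Fin (2 * m) × Fin m) ⊕ Fin m ⊕ Fin m) ∈ (M' \ {Sum.inr (Sum.inr (Sum.inl (i, b))), Sum.inr (Sum.inl j), Sum.inr (Sum.inr (Sum.inr (Sum.inr b)))}) ∪ {Sum.inl ⟨(i,j), hp⟩, Sum.inr (Sum.inr (Sum.inr (Sum.inl b)))} := by simp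
  have heuzN : (Sum.inr (Sum.inr (Sum.inr (Sum.inl b))) : {p : Fin (2 * m) × Fin (2 * m) // p ∈ G} ⊕ Fin (2 * m) ⊕
      (Fin (2 * m) × Fin m) ⊕ Fin m ⊕ Fin m) ∈ (M' \ {Sum.inr (Sum.inr (Sum.inl (i, b))), Sum.inr (Sum.inl j), Sum.inr (Sum.inr (Sum.inr (Sum.inr b)))}) ∪ {Sum.inl ⟨(i,j), hp⟩, Sum.inr (Sum.inr (Sum.inr (Sum.inl b)))} := by simp
  have hNu : (inapx m G).mU ((M' \ {Sum.inr (Sum.inr (Sum.inl (i, b))), Sum.inr (Sum.inl j), Sum.inr (Sum.inr (Sum.inr (Sum.inr b)))}) ∪ {Sum.inl ⟨(i,j), hp⟩, Sum.inr (Sum.inr (Sum.inr (Sum.inl b)))}) (Sum.inl i) = some (Sum.inl ⟨(i,j), hp⟩) :=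
    PrefInst.mU_eq_some hNm he0N
  have hNz : (inapx m G).mU ((M' \ {Sum.inr (Sum.inr (Sum.inl (i, b))), Sum.inr (Sum.inl j), Sum.inr (Sum.inr (Sum.inr (Sum.inr b)))}) ∪ {Sum.inl ⟨(i,j), hp⟩, Sum.inr (Sum.inr (Sum.inr (Sum.inl b)))}) (Sum.inr (Sum.inr b))
      = some (Sum.inr (Sum.inr (Sum.inr (Sum.inl b)))) := PrefInst.mU_eq_some hNm heuzN
  have hNw : (inapx m G).mW ((M' \ {Sum.inr (Sum.inr (Sum.inl (i, b))), Sum.inr (Sum.inl j), Sum.inr (Sum.inr (Sum.inr (Sum.inr b)))}) ∪ {Sum.inl ⟨(i,j), hp⟩, Sum.inr (Sum.inr (Sum.inr (Sum.inl b)))}) (Sum.inl j) = some (Sum.inl ⟨(i,j), hp⟩) :=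
    PrefInst.mW_eq_some hNm he0N
  have hNub : (inapx m G).mW ((M' \ {Sum.inr (Sum.inr (Sum.inl (i, b))), Sum.inr (Sum.inl j), Sum.inr (Sum.inr (Sum.inr (Sum.inr b)))}) ∪ {Sum.inl ⟨(i,j), hp⟩, Sum.inr (Sum.inr (Sum.inr (Sum.inl b)))}) (Sum.inr (Sum.inl b))
      = some (Sum.inr (Sum.inr (Sum.inr (Sum.inl b)))) := PrefInst.mW_eq_some hNm heuzN
  have hMub : (inapx m G).mW M' (Sum.inr (Sum.inl b))
      = some (Sum.inr (Sum.inr (Sum.inl (i, b)))) := PrefInst.mW_eq_some hM' hcM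
  have hMzb : (inapx m G).mW M' (Sum.inr (Sum.inr b))
      = some (Sum.inr (Sum.inr (Sum.inr (Sum.inr b)))) := PrefInst.mW_eq_some hM' hfM
  have hNzb : (inapx m G).mW ((M' \ {Sum.inr (Sum.inr (Sum.inl (i, b))), Sum.inr (Sum.inl j), Sum.inr (Sum.inr (Sum.inr (Sum.inr b)))}) ∪ {Sum.inl ⟨(i,j), hp⟩, Sum.inr (Sum.inr (Sum.inr (Sum.inl b)))}) (Sum.inr (Sum.inr b)) = none := by
    refine PrefInst.mW_eq_none ?_
    intro e heN hde
    rcases Finset.mem_union.mp heN with h' | h'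
    · obtain ⟨heM, heR⟩ := Finset.mem_sdiff.mp h'
      exact heR (by
        rw [PrefInst.eq_of_dst hM' heM hfM hde]
        simp)
    · simp only [Finset.mem_insert, Finset.mem_singleton] at h'
      rcases h' with rfl | rfl <;> simp [inapx] at hde
  have hUsum : (∑ u, (inapx m G).wVoteU M' ((M' \ {Sum.inr (Sum.inr (Sum.inl (i, b))), Sum.inr (Sum.inl j), Sum.inr (Sum.inr (Sum.inr (Sum.inr b)))}) ∪ {Sum.inl ⟨(i,j), hp⟩, Sum.inr (Sum.inr (Sum.inr (Sum.inl b)))}) u) = -1 := by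
    rw [PrefInst.sum_wVoteU_eq]
    have himg : ((({Sum.inr (Sum.inr (Sum.inl (i, b))), Sum.inr (Sum.inl j), Sum.inr (Sum.inr (Sum.inr (Sum.inr b)))} : Finset ({p : Fin (2 * m) × Fin (2 * m) // p ∈ G} ⊕ Fin (2 * m) ⊕
      (Fin (2 * m) × Fin m) ⊕ Fin m ⊕ Fin m)) ∪ {Sum.inl ⟨(i,j), hp⟩, Sum.inr (Sum.inr (Sum.inr (Sum.inl b)))}).image
        (inapx m G).src) = {Sum.inl i, Sum.inr (Sum.inl j), Sum.inr (Sum.inr b)} := by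
      ext t; simp [inapx] <;> tauto
    have v1 : (inapx m G).wVoteU M' ((M' \ {Sum.inr (Sum.inr (Sum.inl (i, b))), Sum.inr (Sum.inl j), Sum.inr (Sum.inr (Sum.inr (Sum.inr b)))}) ∪ {Sum.inl ⟨(i,j), hp⟩, Sum.inr (Sum.inr (Sum.inr (Sum.inl b)))}) (Sum.inl i) = -1 := by
      refine PrefInst.wVoteU_eq_neg ?_
      rw [h1, hNu]
      norm_num [PrefInst.valU, inapx]
    have v3 : (inapx m G).wVoteU M' ((M' \ {Sum.inr (Sum.inr (Sum.inl (i, b))), Sum.inr (Sum.inl j), Sum.inr (Sum.inr (Sum.inr (Sum.inr b)))}) ∪ {Sum.inl ⟨(i,j), hp⟩, Sum.inr (Sum.inr (Sum.inr (Sum.inl b)))}) (Sum.inr (Sum.inr b)) = -1 := by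
      refine PrefInst.wVoteU_eq_neg ?_
      rw [h3, hNz]
      norm_num [PrefInst.valU, inapx]
    have hMwj' : (inapx m G).mU M' (Sum.inr (Sum.inl j)) = some (Sum.inr (Sum.inl j)) :=
      PrefInst.mU_eq_some hM' hdM
    have hNwj' : (inapx m G).mU ((M' \ {Sum.inr (Sum.inr (Sum.inl (i, b))), Sum.inr (Sum.inl j), Sum.inr (Sum.inr (Sum.inr (Sum.inr b)))}) ∪ {Sum.inl ⟨(i,j), hp⟩, Sum.inr (Sum.inr (Sum.inr (Sum.inl b)))}) (Sum.inr (Sum.inl j)) = none := by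
      refine PrefInst.mU_eq_none ?_
      intro e heN hse
      rcases Finset.mem_union.mp heN with h' | h'
      · obtain ⟨heM, heR⟩ := Finset.mem_sdiff.mp h'
        exact heR (by
          rw [PrefInst.eq_of_src hM' heM hdM hse]
          simp)
      · simp only [Finset.mem_insert, Finset.mem_singleton] at h'
        rcases h' with rfl | rfl <;> simp [inapx] at hse
    rw [himg, Finset.sum_insert (by simp), Finset.sum_insert (by simp),
      Finset.sum_singleton]
    have v2 : (inapx m G).wVoteU M' ((M' \ {Sum.inr (Sum.inr (Sum.inl (i, b))), Sum.inr (Sum.inl j), Sum.inr (Sum.inr (Sum.inr (Sum.inr b)))}) ∪ {Sum.inl ⟨(i,j), hp⟩, Sum.inr (Sum.inr (Sum.inr (Sum.inl b)))}) (Sum.inr (Sum.inl j)) = 1 := by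
      refine PrefInst.wVoteU_eq_one (by rw [hMwj', hNwj']; simp) ?_
      rw [hMwj', hNwj']
      norm_num [PrefInst.valU, inapx]
    rw [v1, v2, v3]
    norm_num
  have hWsum : (∑ w, (inapx m G).wVoteW M' ((M' \ {Sum.inr (Sum.inr (Sum.inl (i, b))), Sum.inr (Sum.inl j), Sum.inr (Sum.inr (Sum.inr (Sum.inr b)))}) ∪ {Sum.inl ⟨(i,j), hp⟩, Sum.inr (Sum.inr (Sum.inr (Sum.inl b)))}) w) = -1 := by
    rw [PrefInst.sum_wVoteW_eq]
    have himg : ((({Sum.inr (Sum.inr (Sum.inl (i, b))), Sum.inr (Sum.inl j), Sum.inr (Sum.inr (Sum.inr (Sum.inr b)))} : Finset ({p : Fin (2 * m) × Fin (2 * m) // p ∈ G} ⊕ Fin (2 * m) ⊕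
      (Fin (2 * m) × Fin m) ⊕ Fin m ⊕ Fin m)) ∪ {Sum.inl ⟨(i,j), hp⟩, Sum.inr (Sum.inr (Sum.inr (Sum.inl b)))}).image
        (inapx m G).dst) = ({Sum.inl j, Sum.inr (Sum.inl b), Sum.inr (Sum.inr b)} : Finset _) := by
      ext t; simp [inapx] <;> tauto
    have w1 : (inapx m G).wVoteW M' ((M' \ {Sum.inr (Sum.inr (Sum.inl (i, b))), Sum.inr (Sum.inl j), Sum.inr (Sum.inr (Sum.inr (Sum.inr b)))}) ∪ {Sum.inl ⟨(i,j), hp⟩, Sum.inr (Sum.inr (Sum.inr (Sum.inl b)))}) (Sum.inl j) = -1 := by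
      refine PrefInst.wVoteW_eq_neg ?_
      rw [h2, hNw]
      norm_num [PrefInst.valW, inapx]
    have w2 : (inapx m G).wVoteW M' ((M' \ {Sum.inr (Sum.inr (Sum.inl (i, b))), Sum.inr (Sum.inl j), Sum.inr (Sum.inr (Sum.inr (Sum.inr b)))}) ∪ {Sum.inl ⟨(i,j), hp⟩, Sum.inr (Sum.inr (Sum.inr (Sum.inl b)))}) (Sum.inr (Sum.inl b)) = -1 := by
      refine PrefInst.wVoteW_eq_neg ?_
      rw [hMub, hNub]
      norm_num [PrefInst.valW, inapx]
    have w3 : (inapx m G).wVoteW M' ((M' \ {Sum.inr (Sum.inr (Sum.inl (i, b))), Sum.inr (Sum.inl j), Sum.inr (Sum.inr (Sum.inr (Sum.inr b)))}) ∪ {Sum.inl ⟨(i,j), hp⟩, Sum.inr (Sum.inr (Sum.inr (Sum.inl b)))}) (Sum.inr (Sum.inr b)) = 1 := by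
      refine PrefInst.wVoteW_eq_one (by rw [hMzb, hNzb]; simp) ?_
      rw [hMzb, hNzb]
      norm_num [PrefInst.valW, inapx]
    rw [himg, Finset.sum_insert (by simp), Finset.sum_insert (by simp),
      Finset.sum_singleton, w1, w2, w3]
    norm_num
  rw [hUsum, hWsum] at hcon
  norm_num at hcon


open PrefInst in
/-- If the reduction instance `I'` has a weakly popular matching of
size at least `(5/2)n − k = 5m − k` (with `k ≥ n/2 = m`), then `G` has a maximal
matching of size at most `k`. -/
theorem inapx_weakly_popular_gives_maximal
    (m k : ℕ) (G : Finset (Fin (2 * m) × Fin (2 * m))) (hk : m ≤ k)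
    (M' : Finset ({p : Fin (2 * m) × Fin (2 * m) // p ∈ G} ⊕ Fin (2 * m) ⊕
      (Fin (2 * m) × Fin m) ⊕ Fin m ⊕ Fin m))
    (hM' : (inapx m G).IsMatching M')
    (hpop : (inapx m G).WeaklyPopular M')
    (hcard : 5 * m - k ≤ M'.card) :
    ∃ K, IsMaximalMatchingOf G K ∧ K.card ≤ k  := by
  classical
  rcases Nat.eq_zero_or_pos m with hm0 | hm
  · subst hm0
    exact ⟨∅, ⟨empty_subset _, fun p hp => absurd hp (Finset.notMem_empty p),
      fun p hp => p.1.elim0⟩, by simp⟩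
  -- counting part
  have hdisj : ∀ e ∈ M', ∀ f ∈ M', e ≠ f →
      Disjoint (inapxSlots m G e) (inapxSlots m G f) := by
    intro e he f hf hne
    obtain ⟨hsrc, hdst⟩ := hM' e he f hf hne
    rw [Finset.disjoint_left]
    intro t hte htf
    rcases e with p | i1 | ⟨i1, b1⟩ | a1 | a1 <;>
      rcases f with p' | i2 | ⟨i2, b2⟩ | a2 | a2 <;>
      simp only [inapxSlots, Finset.mem_insert, Finset.mem_singleton] at hte htf <;>
      simp only [inapx, ne_eq, Sum.inl.injEq, Sum.inr.injEq] at hsrc hdst <;>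
      first
      | (rcases hte with rfl | rfl <;> rcases htf with h | h <;> simp_all)
      | (rcases hte with rfl | rfl <;> simp_all)
      | (subst hte; simp_all)
      | simp_all
  have hslotcard : ∀ e, (inapxSlots m G e).card = (if e.isLeft then 2 else 1) := by
    intro e
    rcases e with p | i1 | q1 | a1 | a1
    · exact Finset.card_pair (by simp)
    all_goals simp [inapxSlots]
  have hsum1 : ∑ e ∈ M', (inapxSlots m G e).card = (M'.biUnion (inapxSlots m G)).card :=
    (Finset.card_biUnion hdisj).symm
  have hsum2 : (M'.biUnion (inapxSlots m G)).card ≤ 5 * m := by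
    have := Finset.card_le_univ (M'.biUnion (inapxSlots m G))
    simp only [Finset.card_univ, Fintype.card_sum, Fintype.card_fin] at this
    omega
  have hsum3 : ∑ e ∈ M', (inapxSlots m G e).card
      = (M'.filter (fun e => e.isLeft)).card + M'.card := by
    rw [Finset.sum_congr rfl (fun e _ => hslotcard e)]
    have hh : ∀ e ∈ M', (if e.isLeft then 2 else 1)
        = (if e.isLeft then 1 else 0) + 1 := by
      intro e _; split <;> rfl
    rw [Finset.sum_congr rfl hh, Finset.sum_add_distrib, Finset.sum_const,
      smul_eq_mul, mul_one, Finset.card_filter]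
  have hAk : (M'.filter (fun e => e.isLeft)).card ≤ k := by omega
  -- the matching K
  refine ⟨(M'.filter (fun e => e.isLeft)).image
      (fun e => match e with
        | Sum.inl p => p.1
        | _ => ((⟨0, by omega⟩ : Fin (2 * m)), (⟨0, by omega⟩ : Fin (2 * m)))),
    ⟨?_, ?_, ?_⟩, le_trans Finset.card_image_le hAk⟩
  · -- K ⊆ G
    intro q hq
    obtain ⟨e, he, hg⟩ := Finset.mem_image.mp hq
    obtain ⟨heM, heL⟩ := Finset.mem_filter.mp he
    rcases e with p | i1 | q1 | a1 | a1
    · have : p.1 = q := hg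
      rw [← this]; exact p.2
    all_goals exact absurd heL (by simp)
  · -- K is a matching
    intro q1 hq1 q2 hq2 hne
    obtain ⟨e1, he1, hg1⟩ := Finset.mem_image.mp hq1
    obtain ⟨e2, he2, hg2⟩ := Finset.mem_image.mp hq2
    obtain ⟨he1M, he1L⟩ := Finset.mem_filter.mp he1
    obtain ⟨he2M, he2L⟩ := Finset.mem_filter.mp he2
    obtain ⟨p1, rfl⟩ : ∃ p, e1 = Sum.inl p := by
      rcases e1 with p1 | i1 | q1' | a1 | a1
      · exact ⟨p1, rfl⟩
      all_goals exact absurd he1L (by simp)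
    obtain ⟨p2, rfl⟩ : ∃ p, e2 = Sum.inl p := by
      rcases e2 with p2 | i2 | q2' | a2 | a2
      · exact ⟨p2, rfl⟩
      all_goals exact absurd he2L (by simp)
    have hq1' : p1.1 = q1 := hg1
    have hq2' : p2.1 = q2 := hg2
    subst hq1'; subst hq2'
    have hne12 : (Sum.inl p1 : {p : Fin (2 * m) × Fin (2 * m) // p ∈ G} ⊕ Fin (2 * m) ⊕
        (Fin (2 * m) × Fin m) ⊕ Fin m ⊕ Fin m) ≠ Sum.inl p2 := by
      intro h
      apply hne
      rw [Sum.inl.injEq] at h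
      rw [h]
    obtain ⟨hs, hd⟩ := hM' _ he1M _ he2M hne12
    simp only [inapx, ne_eq, Sum.inl.injEq] at hs hd
    exact ⟨hs, hd⟩
  · -- maximality
    rintro ⟨i, j⟩ hp
    by_contra hno
    push_neg at hno
    have hGfree : ∀ q : {p : Fin (2 * m) × Fin (2 * m) // p ∈ G},
        Sum.inl q ∈ M' → q.1.1 ≠ i ∧ q.1.2 ≠ j := by
      intro q hq
      have hqK : q.1 ∈ (M'.filter (fun e => e.isLeft)).image
          (fun e => match e with
            | Sum.inl p => p.1
            | _ => ((⟨0, by omega⟩ : Fin (2 * m)), (⟨0, by omega⟩ : Fin (2 * m)))) :=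
        Finset.mem_image.mpr ⟨Sum.inl q, Finset.mem_filter.mpr ⟨hq, rfl⟩, rfl⟩
      have := hno q.1 hqK
      exact this
    have hshapeU : ∀ f ∈ M', (inapx m G).src f = Sum.inl i →
        ∃ b : Fin m, f = Sum.inr (Sum.inr (Sum.inl (i, b))) := by
      intro f hf hsf
      rcases f with q | i1 | ⟨i1, b⟩ | a | a <;> simp [inapx] at hsf
      · exact absurd hsf ((hGfree q hf).1)
      · subst hsf; exact ⟨b, rfl⟩
    have hshapeW : ∀ f ∈ M', (inapx m G).dst f = Sum.inl j →
        f = Sum.inr (Sum.inl j) := by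
      intro f hf hdf
      rcases f with q | i1 | ⟨i1, b⟩ | a | a <;> simp [inapx] at hdf
      · exact absurd hdf ((hGfree q hf).2)
      · subst hdf; rfl
    rcases h1 : (inapx m G).mU M' (Sum.inl i) with _ | c
    · rcases h2 : (inapx m G).mW M' (Sum.inl j) with _ | d
      · exact inapxCaseA1 m G M' hM' hpop i j hp h1 h2
      · obtain ⟨hdM, hdd⟩ := PrefInst.mW_mem h2
        have hd' := hshapeW d hdM hdd
        subst hd'
        exact inapxCaseA2 m G M' hM' hpop i j hp h1 hdM
    · obtain ⟨hcM, hcs⟩ := PrefInst.mU_mem h1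
      obtain ⟨b, rfl⟩ := hshapeU c hcM hcs
      rcases h3 : (inapx m G).mU M' (Sum.inr (Sum.inr b)) with _ | f
      · exact inapxCaseB0 m G M' hM' hpop b h3
      · obtain ⟨hfM, hfs⟩ := PrefInst.mU_mem h3
        have hf' : f = Sum.inr (Sum.inr (Sum.inr (Sum.inr b))) := by
          rcases f with q | i1 | ⟨i1, b1⟩ | a | a <;> simp [inapx] at hfs
          · subst hfs
            exact absurd (PrefInst.eq_of_dst hM' hfM hcM rfl) (by simp)
          · subst hfs; rfl
        subst hf'
        rcases h2 : (inapx m G).mW M' (Sum.inl j) with _ | d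
        · exact inapxCaseB1 m G M' hM' hpop i j hp b hcM hfM h2
        · obtain ⟨hdM, hdd⟩ := PrefInst.mW_mem h2
          have hd' := hshapeW d hdM hdd
          subst hd'
          exact inapxCaseB2 m G M' hM' hpop i j hp b hcM hfM hdM
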